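/- Let M ⊆ ℤ² be a nonempty set. For m = (m₁,m₂), n = (n₁,n₂) ∈ ℤ² write m ∧ n = m₁n₂ − m₂n₁. Then the additive subgroup of ℤ² generated by M equals all of ℤ² if and only if the additive subgroup of ℤ generated by the set {m ∧ n : m, n ∈ M} equals all of ℤ (equivalently, if and only if the greatest common divisor of the numbers {m ∧ n : m, n ∈ M} equals 1). -/
import Mathlib


open Set

/-- The subgroup of `ℤ²` generated by a nonempty set `M` is all of `ℤ²` if and only if
the subgroup of `ℤ` generated by the wedges `m ∧ n = m₁n₂ − m₂n₁`, `m, n ∈ M`, is all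
of `ℤ` (i.e. the g.c.d. of these wedges is `1`). -/
theorem stmt_10 (M : Set (ℤ × ℤ)) (hM : M.Nonempty) :
    AddSubgroup.closure M = ⊤ ↔
      AddSubgroup.closure
        {z : ℤ | ∃ m ∈ M, ∃ n ∈ M, z = m.1 * n.2 - m.2 * n.1} = ⊤ := by
  set W : Set ℤ := {z : ℤ | ∃ m ∈ M, ∃ n ∈ M, z = m.1 * n.2 - m.2 * n.1} with hWdef
  constructor
  · intro h
    have key : ∀ m ∈ AddSubgroup.closure M, ∀ n ∈ AddSubgroup.closure M,
        m.1 * n.2 - m.2 * n.1 ∈ AddSubgroup.closure W := by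
      intro m hm
      refine AddSubgroup.closure_induction (p := fun m _ => ∀ n ∈ AddSubgroup.closure M,
          m.1 * n.2 - m.2 * n.1 ∈ AddSubgroup.closure W) ?_ ?_ ?_ ?_ hm
      · intro x hx n hn
        refine AddSubgroup.closure_induction (p := fun n _ =>
            x.1 * n.2 - x.2 * n.1 ∈ AddSubgroup.closure W) ?_ ?_ ?_ ?_ hn
        · intro y hy
          exact AddSubgroup.subset_closure ⟨x, hx, y, hy, rfl⟩
        · simpa using (AddSubgroup.closure W).zero_mem
        · intro a b _ _ ha hb
          have : x.1 * (a + b).2 - x.2 * (a + b).1 =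
              (x.1 * a.2 - x.2 * a.1) + (x.1 * b.2 - x.2 * b.1) := by
            simp [Prod.fst_add, Prod.snd_add]; ring
          rw [this]; exact add_mem ha hb
        · intro a _ ha
          have : x.1 * (-a).2 - x.2 * (-a).1 = -(x.1 * a.2 - x.2 * a.1) := by
            simp; ring
          rw [this]; exact neg_mem ha
      · intro n _; simpa using (AddSubgroup.closure W).zero_mem
      · intro a b _ _ ha hb n hn
        have : (a + b).1 * n.2 - (a + b).2 * n.1 =
            (a.1 * n.2 - a.2 * n.1) + (b.1 * n.2 - b.2 * n.1) := by
          simp [Prod.fst_add, Prod.snd_add]; ring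
        rw [this]; exact add_mem (ha n hn) (hb n hn)
      · intro a _ ha n hn
        have : (-a).1 * n.2 - (-a).2 * n.1 = -(a.1 * n.2 - a.2 * n.1) := by
          simp; ring
        rw [this]; exact neg_mem (ha n hn)
    have h1 : (1 : ℤ) ∈ AddSubgroup.closure W := by
      have := key (1, 0) (h ▸ AddSubgroup.mem_top _) (0, 1) (h ▸ AddSubgroup.mem_top _)
      simpa using this
    rw [AddSubgroup.eq_top_iff']
    intro x
    have := zsmul_mem h1 x
    simpa using this
  · intro h
    rw [AddSubgroup.eq_top_iff']
    intro c
    have hsub : AddSubgroup.closure W ≤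
        (AddSubgroup.closure M).comap (zmultiplesHom (ℤ × ℤ) c) := by
      rw [AddSubgroup.closure_le]
      rintro z ⟨m, hm, n, hn, rfl⟩
      have hmem : (m.1 * c.2 - m.2 * c.1) • n - (n.1 * c.2 - n.2 * c.1) • m ∈
          AddSubgroup.closure M :=
        sub_mem (zsmul_mem (AddSubgroup.subset_closure hn) _)
          (zsmul_mem (AddSubgroup.subset_closure hm) _)
      have hid : (m.1 * n.2 - m.2 * n.1) • c =
          (m.1 * c.2 - m.2 * c.1) • n - (n.1 * c.2 - n.2 * c.1) • m := by
        apply Prod.ext <;> simp [smul_eq_mul] <;> ring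
      show (m.1 * n.2 - m.2 * n.1) • c ∈ AddSubgroup.closure M
      rw [hid]; exact hmem
    have h1 : (1 : ℤ) ∈ AddSubgroup.closure W := h ▸ AddSubgroup.mem_top _
    have := hsub h1
    simpa using this
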